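/- Let H be a Hall universal group and let g ∈ Aut(H) be a generic automorphism, i.e., the conjugacy class { f g f⁻¹ : f ∈ Aut(H) } is comeager in Aut(H). Then g has infinite order in the group Aut(H): gⁿ is not the identity automorphism for any integer n ≥ 1. -/

import Mathlib

/-- A group `H` is a *Hall universal group* if it is countable, locally finite,
every finite group embeds into it, and any two isomorphic finite subgroups are
conjugate in `H`.  (Philip Hall's universal locally finite group is the unique
such group up to isomorphism.) -/
structure IsHallUniversal (H : Type*) [Group H] : Prop where
  /-- `H` is countable. -/
  countable : Countable H
  /-- `H` is locally finite: every finitely generated subgroup is finite. -/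
  locallyFinite : ∀ S : Subgroup H, S.FG → Finite S
  /-- Every finite group embeds into `H`. -/
  embedsFinite : ∀ (G : Type) [Group G] [Finite G], ∃ f : G →* H, Function.Injective f
  /-- Any two isomorphic finite subgroups of `H` are conjugate in `H`. -/
  conjIso : ∀ A B : Subgroup H, Finite A → Finite B → Nonempty (A ≃* B) →
    ∃ h : H, Subgroup.map (MulAut.conj h).toMonoidHom A = B

/-- The topology of pointwise convergence on `Aut H`: the topology induced by viewing an
automorphism `f` as the function `f : H → H` in the product space `H → H`, where `H`
carries the discrete topology. -/
instance hallAutTopology (H : Type*) [Group H] : TopologicalSpace (MulAut H) :=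
  letI : TopologicalSpace H := ⊥
  TopologicalSpace.induced (fun f : MulAut H => (f : H → H)) Pi.topologicalSpace

section Aux

variable {H : Type*} [Group H]

/-- Basic open (in fact clopen) sets: conditions `f a = b`. -/
theorem hallAut_isOpen_eval (a b : H) : IsOpen {f : MulAut H | f a = b} := by
  letI : TopologicalSpace H := ⊥
  haveI : DiscreteTopology H := ⟨rfl⟩
  have h : {f : MulAut H | f a = b}
      = (fun f : MulAut H => (f : H → H)) ⁻¹' ((fun v : H → H => v a) ⁻¹' {b}) := rfl
  rw [h]
  have hG : Continuous fun f : MulAut H => (f : H → H) := continuous_induced_dom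
  have hO : IsOpen ((fun v : H → H => v a) ⁻¹' {b}) :=
    (continuous_apply (A := fun _ : H => H) a).isOpen_preimage {b} (isOpen_discrete _)
  exact hO.preimage hG

/-- `Aut H` with the topology of pointwise convergence is a Baire space. -/
theorem hallAut_baire (H : Type*) [Group H] [Countable H] : BaireSpace (MulAut H) := by
  letI : TopologicalSpace H := ⊥
  haveI : DiscreteTopology H := ⟨rfl⟩
  -- inversion is continuous
  have hInv : Continuous fun f : MulAut H => ((f⁻¹ : MulAut H) : H → H) := by
    refine continuous_pi fun a => ?_
    rw [continuous_discrete_rng]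
    intro b
    have h : (fun f : MulAut H => (f⁻¹ : MulAut H) a) ⁻¹' {b} = {f : MulAut H | f b = a} := by
      ext f
      simp only [Set.mem_preimage, Set.mem_singleton_iff, Set.mem_setOf_eq]
      constructor
      · intro h; rw [← h]; exact f.apply_symm_apply a
      · intro h; rw [← h]; exact f.symm_apply_apply b
    rw [h]
    exact hallAut_isOpen_eval b a
  set e : MulAut H → (H → H) × (H → H) :=
    fun f => ((f : H → H), ((f⁻¹ : MulAut H) : H → H)) with he
  -- evaluation is continuous
  have heval : Continuous fun q : (H → H) × H => q.1 q.2 := by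
    rw [continuous_discrete_rng]
    intro b
    have h : (fun q : (H → H) × H => q.1 q.2) ⁻¹' {b}
        = ⋃ a : H, {v : H → H | v a = b} ×ˢ ({a} : Set H) := by
      ext ⟨v, a⟩
      simp only [Set.mem_preimage, Set.mem_singleton_iff, Set.mem_iUnion, Set.mem_prod,
        Set.mem_setOf_eq]
      constructor
      · intro hv; exact ⟨a, hv, rfl⟩
      · rintro ⟨c, h1, rfl⟩; exact h1
    rw [h]
    refine isOpen_iUnion fun a => IsOpen.prod ?_ (isOpen_discrete _)
    have hO : IsOpen ((fun v : H → H => v a) ⁻¹' {b}) :=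
      (continuous_apply (A := fun _ : H => H) a).isOpen_preimage {b} (isOpen_discrete _)
    exact hO
  have e1 : ∀ x : H, Continuous fun p : (H → H) × (H → H) => p.1 x := fun x =>
    (continuous_apply x).comp continuous_fst
  have e2 : ∀ x : H, Continuous fun p : (H → H) × (H → H) => p.2 x := fun x =>
    (continuous_apply x).comp continuous_snd
  -- `e` is inducing
  have hind : Topology.IsInducing e := by
    constructor
    have h1 : TopologicalSpace.induced e instTopologicalSpaceProd =
        TopologicalSpace.induced (fun f : MulAut H => (f : H → H)) Pi.topologicalSpace ⊓
        TopologicalSpace.induced (fun f : MulAut H => ((f⁻¹ : MulAut H) : H → H))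
          Pi.topologicalSpace := by
      show TopologicalSpace.induced e
        (TopologicalSpace.induced Prod.fst Pi.topologicalSpace ⊓
         TopologicalSpace.induced Prod.snd Pi.topologicalSpace) = _
      rw [induced_inf, induced_compose, induced_compose]
      rfl
    rw [h1]
    exact (inf_eq_left.mpr (continuous_iff_le_induced.mp hInv)).symm
  -- `e` is injective
  have hinj : Function.Injective e := by
    intro f f' h
    ext x
    exact congrFun (congrArg Prod.fst h) x
  -- range of `e` is closed
  have hrange : IsClosed (Set.range e) := by
    have h : Set.range e = {p : (H → H) × (H → H) |
        (∀ x y : H, p.1 (x * y) = p.1 x * p.1 y) ∧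
        (∀ x : H, p.2 (p.1 x) = x) ∧ (∀ x : H, p.1 (p.2 x) = x)} := by
      ext ⟨u, v⟩
      constructor
      · rintro ⟨f, hf⟩
        obtain ⟨rfl, rfl⟩ : (⇑f = u ∧ ⇑(f⁻¹) = v) :=
          ⟨congrArg Prod.fst hf, congrArg Prod.snd hf⟩
        exact ⟨fun x y => map_mul f x y, fun x => f.symm_apply_apply x,
          fun x => f.apply_symm_apply x⟩
      · rintro ⟨h1, h2, h3⟩
        exact ⟨MulEquiv.mk ⟨u, v, h2, h3⟩ h1, rfl⟩
    rw [h]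
    have hA : IsClosed {p : (H → H) × (H → H) | ∀ x y : H, p.1 (x * y) = p.1 x * p.1 y} := by
      have : {p : (H → H) × (H → H) | ∀ x y : H, p.1 (x * y) = p.1 x * p.1 y}
          = ⋂ x : H, ⋂ y : H, {p : (H → H) × (H → H) | p.1 (x * y) = p.1 x * p.1 y} := by
        ext p; simp
      rw [this]
      refine isClosed_iInter fun x => isClosed_iInter fun y => isClosed_eq (e1 _) ?_
      exact (continuous_of_discreteTopology (α := H × H)
        (f := fun q : H × H => q.1 * q.2)).comp ((e1 x).prodMk (e1 y))
    have hB : IsClosed {p : (H → H) × (H → H) | ∀ x : H, p.2 (p.1 x) = x} := by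
      have : {p : (H → H) × (H → H) | ∀ x : H, p.2 (p.1 x) = x}
          = ⋂ x : H, {p : (H → H) × (H → H) | p.2 (p.1 x) = x} := by
        ext p; simp
      rw [this]
      exact isClosed_iInter fun x =>
        isClosed_eq (heval.comp (continuous_snd.prodMk (e1 x))) continuous_const
    have hC : IsClosed {p : (H → H) × (H → H) | ∀ x : H, p.1 (p.2 x) = x} := by
      have : {p : (H → H) × (H → H) | ∀ x : H, p.1 (p.2 x) = x}
          = ⋂ x : H, {p : (H → H) × (H → H) | p.1 (p.2 x) = x} := by
        ext p; simp
      rw [this]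
      exact isClosed_iInter fun x =>
        isClosed_eq (heval.comp (continuous_fst.prodMk (e2 x))) continuous_const
    exact hA.inter (hB.inter hC)
  haveI : TopologicalSpace.IsCompletelyMetrizableSpace ((H → H) × (H → H)) := inferInstance
  haveI : TopologicalSpace.SeparableSpace ((H → H) × (H → H)) := inferInstance
  haveI : PolishSpace ((H → H) × (H → H)) := inferInstance
  have hce : Topology.IsClosedEmbedding e := ⟨⟨hind, hinj⟩, hrange⟩
  haveI : PolishSpace (MulAut H) := hce.polishSpace
  letI := TopologicalSpace.upgradeIsCompletelyMetrizable (MulAut H)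
  infer_instance

end Aux

/-- **Every generic automorphism of a Hall universal group has infinite order:**
`gⁿ ≠ 1` for every `n ≥ 1`. -/
theorem hallUniversal_generic_infinite_order
    (H : Type*) [Group H] (hH : IsHallUniversal H) (g : MulAut H)
    (hg : {h : MulAut H | ∃ f : MulAut H, h = f * g * f⁻¹} ∈ residual (MulAut H))
    (n : ℕ) (hn : 1 ≤ n) :
    g ^ n ≠ 1 := by
  intro hgn
  haveI : Countable H := hH.countable
  haveI : BaireSpace (MulAut H) := hallAut_baire H
  have hdense : Dense {h : MulAut H | ∃ f : MulAut H, h = f * g * f⁻¹} :=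
    dense_of_mem_residual hg
  haveI : NeZero (2 * n + 1) := ⟨by omega⟩
  obtain ⟨φ, hφ⟩ := hH.embedsFinite (DihedralGroup (2 * n + 1))
  set a : DihedralGroup (2 * n + 1) := DihedralGroup.r 1 with ha
  set b : DihedralGroup (2 * n + 1) := DihedralGroup.sr 0 with hb
  -- `aⁿ` does not commute with `b`
  have hne : a ^ n * b ≠ b * a ^ n := by
    rw [ha, hb, DihedralGroup.r_one_pow, DihedralGroup.r_mul_sr, DihedralGroup.sr_mul_r]
    intro hEq
    have h2 : -(n : ZMod (2 * n + 1)) = (n : ZMod (2 * n + 1)) := by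
      simpa using hEq
    have h3 : ((2 * n : ℕ) : ZMod (2 * n + 1)) = 0 := by
      push_cast
      linear_combination -h2
    have h4 := (ZMod.natCast_eq_zero_iff (2 * n) (2 * n + 1)).mp h3
    have h5 := Nat.le_of_dvd (by omega) h4
    omega
  have hab : a ^ n * b * (a ^ n)⁻¹ ≠ b := fun hEq => hne (by
    rw [mul_inv_eq_iff_eq_mul] at hEq
    exact hEq)
  set x := φ a with hx
  set z := φ b with hzdef
  set h₀ : MulAut H := MulAut.conj x with hh₀
  have hz : (h₀ ^ n) z ≠ z := by
    have hpow : h₀ ^ n = MulAut.conj (x ^ n) := by rw [hh₀, ← map_pow]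
    rw [hpow]
    simp only [MulAut.conj_apply]
    intro hEq
    apply hab
    apply hφ
    rw [map_mul, map_mul, map_inv, map_pow]
    exact hEq
  set U : Set (MulAut H) :=
    ⋂ i : Fin n, {h : MulAut H | h ((h₀ ^ (i : ℕ)) z) = (h₀ ^ ((i : ℕ) + 1)) z} with hU
  have hUopen : IsOpen U := isOpen_iInter_of_finite fun i => hallAut_isOpen_eval _ _
  have hU0 : h₀ ∈ U := Set.mem_iInter.mpr fun i => by
    show h₀ ((h₀ ^ (i : ℕ)) z) = (h₀ ^ ((i : ℕ) + 1)) z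
    rw [pow_succ', MulAut.mul_apply]
  obtain ⟨h, hhU, f', rfl⟩ := hdense.inter_open_nonempty U hUopen ⟨h₀, hU0⟩
  have key : ∀ k, k ≤ n → ((f' * g * f'⁻¹) ^ k) z = (h₀ ^ k) z := by
    intro k
    induction k with
    | zero => intro _; rfl
    | succ k ih =>
      intro hk
      have hk' : k ≤ n := by omega
      rw [pow_succ', MulAut.mul_apply, ih hk', pow_succ' h₀ k]
      have hmem := Set.mem_iInter.mp hhU ⟨k, by omega⟩
      rw [pow_succ', MulAut.mul_apply] at hmem
      exact hmem
  have h1 : ((f' * g * f'⁻¹) ^ n) z = z := by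
    rw [conj_pow, hgn, mul_one, mul_inv_cancel, MulAut.one_apply]
  exact hz (by rw [← key n le_rfl, h1])
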